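/- Let γ ≥ 1, P⁻ > 0 and s ∈ (0, 2c_s(P⁻)). For ε ∈ (0, P⁻) set P⁺ = P⁻ − ε, A(ε) = √(P⁻P⁺)·√(((P⁻)^γ − (P⁺)^γ)/ε), J⁻ = sP⁻ − A(ε), J⁺ = J⁻ + s(P⁺ − P⁻), u⁻ = J⁻/P⁻ and u⁺ = J⁺/P⁺. Then there exists ε₀ > 0 such that for every ε ∈ (0, ε₀) both end states are subsonic, i.e. |u⁻| < c_s(P⁻) and |u⁺| < c_s(P⁺). -/

import Mathlib

open Filter Topology Set

/-- for `s ∈ (0, 2c_s(P⁻))` and sufficiently small amplitude, both end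
states of the Lax 2-shock are subsonic: `|u⁻| < c_s(P⁻)` and `|u⁺| < c_s(P⁺)`. -/
theorem statement_12 (γ Pm s : ℝ) (hγ : 1 ≤ γ) (hPm : 0 < Pm) (hs : 0 < s)
    (hs' : s < 2 * Real.sqrt (γ * Pm ^ (γ - 1))) :
    ∃ ε₀ > (0:ℝ), ∀ ε : ℝ, 0 < ε → ε < ε₀ → ε < Pm →
      ∀ A Jm Jp : ℝ,
        A = Real.sqrt (Pm * (Pm - ε)) * Real.sqrt ((Pm ^ γ - (Pm - ε) ^ γ) / ε) →
        Jm = s * Pm - A →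
        Jp = Jm + s * ((Pm - ε) - Pm) →
        |Jm / Pm| < Real.sqrt (γ * Pm ^ (γ - 1)) ∧
        |Jp / (Pm - ε)| < Real.sqrt (γ * (Pm - ε) ^ (γ - 1)) := by
  set c : ℝ := Real.sqrt (γ * Pm ^ (γ - 1)) with hc
  have hγ0 : (0:ℝ) < γ := lt_of_lt_of_le one_pos hγ
  have hq : 0 < γ * Pm ^ (γ - 1) := mul_pos hγ0 (Real.rpow_pos_of_pos hPm _)
  have hc0 : 0 < c := Real.sqrt_pos.mpr hq
  have hlt : |s - c| < c := by
    rw [abs_lt]; constructor <;> [linarith; linarith]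
  -- derivative fact
  have hderiv : HasDerivAt (fun ε : ℝ => Pm ^ γ - (Pm - ε) ^ γ) (γ * Pm ^ (γ - 1)) 0 := by
    have h1 : HasDerivAt (fun x : ℝ => x ^ γ) (γ * Pm ^ (γ - 1)) Pm :=
      Real.hasDerivAt_rpow_const (Or.inl hPm.ne')
    have h2 : HasDerivAt (fun ε : ℝ => Pm - ε) (-1) 0 := by
      simpa using (hasDerivAt_id (0:ℝ)).const_sub Pm
    have h3 : HasDerivAt (fun ε : ℝ => (Pm - ε) ^ γ) (γ * Pm ^ (γ - 1) * (-1)) 0 := by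
      have h1' : HasDerivAt (fun x : ℝ => x ^ γ) (γ * Pm ^ (γ - 1)) (Pm - 0) := by
        simpa using h1
      have := h1'.comp (0:ℝ) h2
      exact this
    have := h3.const_sub (Pm ^ γ)
    simpa using this
  have hT1 : Tendsto (fun ε : ℝ => (Pm ^ γ - (Pm - ε) ^ γ) / ε) (𝓝[>] (0:ℝ))
      (𝓝 (γ * Pm ^ (γ - 1))) := by
    have h := hasDerivAt_iff_tendsto_slope.mp hderiv
    have h' := h.mono_left (nhdsWithin_mono _ (fun x hx => ne_of_gt hx))
    refine h'.congr ?_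
    intro ε
    simp [slope_def_field]
  have hPmM : Tendsto (fun ε : ℝ => Pm - ε) (𝓝[>] (0:ℝ)) (𝓝 Pm) := by
    apply Tendsto.mono_left _ nhdsWithin_le_nhds
    have h := ((continuous_const.sub continuous_id : Continuous fun ε : ℝ => Pm - ε).tendsto 0)
    convert h using 2 <;> simp
  have hA : Tendsto (fun ε : ℝ =>
      Real.sqrt (Pm * (Pm - ε)) * Real.sqrt ((Pm ^ γ - (Pm - ε) ^ γ) / ε))
      (𝓝[>] (0:ℝ)) (𝓝 (Pm * c)) := by
    have t1 : Tendsto (fun ε : ℝ => Real.sqrt (Pm * (Pm - ε))) (𝓝[>] (0:ℝ)) (𝓝 Pm) := by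
      have t : Tendsto (fun ε : ℝ => Pm * (Pm - ε)) (𝓝[>] (0:ℝ)) (𝓝 (Pm * Pm)) :=
        tendsto_const_nhds.mul hPmM
      simpa [Real.sqrt_mul_self hPm.le] using t.sqrt
    exact t1.mul hT1.sqrt
  have hU1 : Tendsto (fun ε : ℝ => |s - Real.sqrt (Pm * (Pm - ε)) *
      Real.sqrt ((Pm ^ γ - (Pm - ε) ^ γ) / ε) / Pm|) (𝓝[>] (0:ℝ)) (𝓝 |s - c|) := by
    have : Tendsto (fun ε : ℝ => s - Real.sqrt (Pm * (Pm - ε)) *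
        Real.sqrt ((Pm ^ γ - (Pm - ε) ^ γ) / ε) / Pm) (𝓝[>] (0:ℝ)) (𝓝 (s - Pm * c / Pm)) :=
      tendsto_const_nhds.sub (hA.div_const Pm)
    rw [show Pm * c / Pm = c by field_simp] at this
    exact this.abs
  have hU2 : Tendsto (fun ε : ℝ => |s - Real.sqrt (Pm * (Pm - ε)) *
      Real.sqrt ((Pm ^ γ - (Pm - ε) ^ γ) / ε) / (Pm - ε)|) (𝓝[>] (0:ℝ)) (𝓝 |s - c|) := by
    have : Tendsto (fun ε : ℝ => s - Real.sqrt (Pm * (Pm - ε)) *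
        Real.sqrt ((Pm ^ γ - (Pm - ε) ^ γ) / ε) / (Pm - ε)) (𝓝[>] (0:ℝ))
        (𝓝 (s - Pm * c / Pm)) :=
      tendsto_const_nhds.sub (hA.div hPmM hPm.ne')
    rw [show Pm * c / Pm = c by field_simp] at this
    exact this.abs
  have hRHS : Tendsto (fun ε : ℝ => Real.sqrt (γ * (Pm - ε) ^ (γ - 1))) (𝓝[>] (0:ℝ)) (𝓝 c) := by
    have t : Tendsto (fun ε : ℝ => (Pm - ε) ^ (γ - 1)) (𝓝[>] (0:ℝ)) (𝓝 (Pm ^ (γ - 1))) :=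
      (Real.continuousAt_rpow_const Pm (γ - 1) (Or.inl hPm.ne')).tendsto.comp hPmM
    exact (tendsto_const_nhds.mul t).sqrt
  have E1 := hU1.eventually_lt tendsto_const_nhds hlt
  have E2 := hU2.eventually_lt hRHS hlt
  obtain ⟨ε₀, hε₀pos, hball⟩ := (nhdsGT_basis (0:ℝ)).eventually_iff.mp (E1.and E2)
  refine ⟨ε₀, hε₀pos, ?_⟩
  intro ε hε hεε₀ hεPm A Jm Jp hAe hJm hJp
  obtain ⟨h1, h2⟩ := hball ⟨hε, hεε₀⟩
  have hPe : (0:ℝ) < Pm - ε := by linarith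
  constructor
  · have : Jm / Pm = s - A / Pm := by rw [hJm]; field_simp
    rw [this, hAe]; exact h1
  · have : Jp / (Pm - ε) = s - A / (Pm - ε) := by
      rw [hJp, hJm]; field_simp; ring
    rw [this, hAe]; exact h2
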